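/- A regular language L ⊆ Γ^∞ is open in the alphabetic topology if and only if for all linked pairs (s,e) and (t,f) of M = Synt(L) with t, f ∈ M_e: [s][e]^ω ⊆ L implies [st][f]^ω ⊆ L. -/

import Mathlib

namespace InfWords

variable {Γ : Type}

/-- Finite and infinite words over `Γ`: `Γ^∞ = Γ* ∪ Γ^ω`. -/
abbrev Word (Γ : Type) := List Γ ⊕ (ℕ → Γ)

/-- Prepend a finite word to a finite or infinite word. -/
def wappend (u : List Γ) : Word Γ → Word Γ
  | Sum.inl v => Sum.inl (u ++ v)
  | Sum.inr f => Sum.inr fun n => if h : n < u.length then u.get ⟨n, h⟩ else f (n - u.length)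

/-- The set of finite words `Γ*` inside `Γ^∞`. -/
def finWords (Γ : Type) : Set (Word Γ) := Set.range Sum.inl

/-- The set of infinite words `Γ^ω` inside `Γ^∞`. -/
def infWords (Γ : Type) : Set (Word Γ) := Set.range Sum.inr

/-- The alphabet of a word: the letters occurring in it. -/
def alph : Word Γ → Set Γ
  | Sum.inl u => {a | a ∈ u}
  | Sum.inr f => {a | ∃ n, f n = a}

/-- The imaginary part: letters occurring infinitely often. -/
def im : Word Γ → Set Γ
  | Sum.inl _ => ∅
  | Sum.inr f => {a | ∀ n, ∃ m, n ≤ m ∧ f m = a}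

/-- `A^∞`: words all of whose letters lie in `A`. -/
def infin (A : Set Γ) : Set (Word Γ) := {α | alph α ⊆ A}

/-- The basic set `u A^∞` of the alphabetic topology. -/
def cone (u : List Γ) (A : Set Γ) : Set (Word Γ) := wappend u '' infin A

/-- The alphabetic topology on `Γ^∞`, generated by the sets `u A^∞`. -/
instance alphTop : TopologicalSpace (Word Γ) :=
  TopologicalSpace.generateFrom {S | ∃ u A, S = cone u A}

/-- `cpx A`: words with `alph = im = A`. -/
def cpx (A : Set Γ) : Set (Word Γ) := {β | alph β = A ∧ im β = A}

/-- The strict alphabetic topology, generated by the sets `u · cpx A`. -/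
def strictTopo (Γ : Type) : TopologicalSpace (Word Γ) :=
  TopologicalSpace.generateFrom {S | ∃ u A, S = wappend u '' cpx A}

/-- `u` is a finite prefix of the word `α`. -/
def IsPre (u : List Γ) : Word Γ → Prop
  | Sum.inl v => u <+: v
  | Sum.inr f => ∀ i : Fin u.length, u.get i = f i.1

/-- The arrow language `→W`: every prefix extends to a prefix lying in `W`. -/
def arrow (W : Set (List Γ)) : Set (Word Γ) :=
  {α | ∀ u, IsPre u α → ∃ v, IsPre (u ++ v) α ∧ u ++ v ∈ W}

/-- The right quotient `L / A^∞`. -/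
def quotInf (L : Set (Word Γ)) (A : Set Γ) : Set (List Γ) :=
  {u | ∃ β ∈ infin A, wappend u β ∈ L}

/-- `A^im`: words whose set of letters occurring infinitely often is exactly `A`. -/
def imSet (A : Set Γ) : Set (Word Γ) := {α | im α = A}

/-- `z^ω`, with the convention `1^ω = 1`. -/
def omegaPow : List Γ → Word Γ
  | [] => Sum.inl []
  | a :: l => Sum.inr fun n => (a :: l).get ⟨n % (a :: l).length, Nat.mod_lt n (Nat.succ_pos _)⟩

/-- The partial products `u v₀ v₁ ⋯ v_{n-1}`. -/
def partialProd (u : List Γ) (v : ℕ → List Γ) (n : ℕ) : List Γ :=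
  u ++ ((List.range n).map v).flatten

/-- `α` is the (finite or infinite) product `u v₀ v₁ v₂ ⋯`, with convention `1^ω = 1`. -/
def IsInfProd (u : List Γ) (v : ℕ → List Γ) : Word Γ → Prop
  | Sum.inl w => (∀ n, partialProd u v n <+: w) ∧ ∃ n, partialProd u v n = w
  | Sum.inr f => (∀ n, IsPre (partialProd u v n) (Sum.inr f)) ∧
      ∀ k, ∃ n, k < (partialProd u v n).length

/-- `h : Γ* → M` is a monoid homomorphism. -/
structure IsHom {M : Type} [Monoid M] (h : List Γ → M) : Prop where
  map_one : h [] = 1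
  map_mul : ∀ u v, h (u ++ v) = h u * h v

/-- `[s][e]^ω`: products `u v₀ v₁ ⋯` with `h u = s` and `h vᵢ = e`. -/
def pairSet {M : Type} (h : List Γ → M) (s e : M) : Set (Word Γ) :=
  {α | ∃ u v, h u = s ∧ (∀ i, h (v i) = e) ∧ IsInfProd u v α}

/-- `(s, e)` is a linked pair. -/
def LinkedPair {M : Type} [Monoid M] (s e : M) : Prop := s * e = s ∧ e * e = e

/-- `h` strongly recognizes `L`. -/
def StronglyRecognizes {M : Type} [Monoid M] (h : List Γ → M) (L : Set (Word Γ)) : Prop :=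
  L = ⋃ (s : M) (e : M) (_ : LinkedPair s e ∧ (pairSet h s e ∩ L).Nonempty), pairSet h s e

/-- `L` is regular: strongly recognized by a surjective homomorphism onto a finite monoid. -/
def Regular (L : Set (Word Γ)) : Prop :=
  ∃ (M : Type) (i : Monoid M), Finite M ∧
    ∃ h : List Γ → M, @IsHom Γ M i h ∧ Function.Surjective h ∧ @StronglyRecognizes Γ M i h L

/-- `L` is deterministic. -/
def Deterministic (L : Set (Word Γ)) : Prop :=
  Regular L ∧ ∃ W : Set (List Γ), L ∩ infWords Γ = arrow W ∩ infWords Γ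

/-- The syntactic preorder `u ≤_L v`. -/
def synLe (L : Set (Word Γ)) (u v : List Γ) : Prop :=
  ∀ x y z : List Γ,
    (wappend (x ++ v ++ y) (omegaPow z) ∈ L → wappend (x ++ u ++ y) (omegaPow z) ∈ L) ∧
    (wappend x (omegaPow (v ++ y)) ∈ L → wappend x (omegaPow (u ++ y)) ∈ L)

/-- The syntactic congruence `u ≡_L v`. -/
def synEq (L : Set (Word Γ)) (u v : List Γ) : Prop := synLe L u v ∧ synLe L v u

/-- `[s][e]^ω` for syntactic classes represented by words `s`, `e`. -/
def pairSetSyn (L : Set (Word Γ)) (s e : List Γ) : Set (Word Γ) :=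
  {α | ∃ u v, synEq L u s ∧ (∀ i, synEq L (v i) e) ∧ IsInfProd u v α}

/-- `s` represents an element of `M_e` in the syntactic monoid of `L`:
`s` is a product of words each of which is a factor of (something equivalent to) `e`. -/
def InMe (L : Set (Word Γ)) (e s : List Γ) : Prop :=
  ∃ parts : List (List Γ), s = parts.flatten ∧ ∀ p ∈ parts, ∃ x y, synEq L (x ++ p ++ y) e

/-- Glue a factorization `u₁ a₁ u₂ a₂ ⋯ u_k a_k` into a single finite word. -/
def glue : List (List Γ) → List (Set Γ × Γ) → List Γ
  | x :: xs, p :: l => x ++ p.2 :: glue xs l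
  | _, _ => []

/-- `(us, β)` is a factorization of `α` as `u₁ a₁ ⋯ u_k a_k β` with `uᵢ ∈ Aᵢ*`, `β ∈ B^∞`. -/
def IsFactorization (l : List (Set Γ × Γ)) (B : Set Γ) (us : List (List Γ)) (β : Word Γ)
    (α : Word Γ) : Prop :=
  us.length = l.length ∧
  (∀ (i : ℕ) (h1 : i < us.length) (h2 : i < l.length),
    ∀ c ∈ us.get ⟨i, h1⟩, c ∈ (l.get ⟨i, h2⟩).1) ∧
  β ∈ infin B ∧ α = wappend (glue us l) β

/-- The monomial `A₁* a₁ ⋯ A_k* a_k B^∞`. -/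
def monomial (l : List (Set Γ × Γ)) (B : Set Γ) : Set (Word Γ) :=
  {α | ∃ us β, IsFactorization l B us β α}

/-- The monomial given by `(l, B)` is unambiguous. -/
def Unambiguous (l : List (Set Γ × Γ)) (B : Set Γ) : Prop :=
  ∀ α us β us' β', IsFactorization l B us β α → IsFactorization l B us' β' α →
    us = us' ∧ β = β'

/-- `L` is a polynomial: a finite union of monomials. -/
def IsPolynomial (L : Set (Word Γ)) : Prop :=
  ∃ ms : List (List (Set Γ × Γ) × Set Γ), L = {α | ∃ m ∈ ms, α ∈ monomial m.1 m.2}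

/-- The set of marker letters of a monomial. -/
def sndSet (l : List (Set Γ × Γ)) : Set Γ := {a | ∃ p ∈ l, p.2 = a}

/-- `M_e`: the submonoid generated by the factors of the idempotent `e`. -/
def Msub {M : Type} [Monoid M] (e : M) : Submonoid M :=
  Submonoid.closure {t | ∃ x y, x * t * y = e}

/-- The variety `DA`: `ese = e` for all idempotents `e` and all `s ∈ M_e`. -/
def IsDA (M : Type) [Monoid M] : Prop :=
  ∀ e : M, e * e = e → ∀ s ∈ Msub e, e * s * e = e

end InfWords
namespace InfWords

variable {Γ : Type}

open List in
lemma wappend_inl (u v : List Γ) : wappend u (Sum.inl v) = Sum.inl (u ++ v) := rfl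

lemma wappend_assoc (u v : List Γ) (α : Word Γ) :
    wappend (u ++ v) α = wappend u (wappend v α) := by
  cases α with
  | inl w => simp [wappend, List.append_assoc]
  | inr f =>
      simp only [wappend]
      congr 1
      funext n
      rcases Nat.lt_or_ge n u.length with h1 | h1
      · rw [dif_pos (by simp; omega), dif_pos h1, List.get_eq_getElem, List.get_eq_getElem,
          List.getElem_append_left h1]
      rcases Nat.lt_or_ge n (u.length + v.length) with h2 | h2
      · rw [dif_pos (by simp; omega), dif_neg (by omega), dif_pos (by omega),
          List.get_eq_getElem, List.get_eq_getElem, List.getElem_append_right h1]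
      · rw [dif_neg (by simp; omega), dif_neg (by omega), dif_neg (by omega)]
        congr 1
        simp; omega

lemma alph_wappend_subset (u : List Γ) (α : Word Γ) :
    alph (wappend u α) ⊆ {a | a ∈ u} ∪ alph α := by
  cases α with
  | inl w =>
      intro a ha
      simp only [wappend, alph, Set.mem_setOf_eq, List.mem_append] at ha
      rcases ha with h | h
      · exact Or.inl h
      · exact Or.inr h
  | inr f =>
      intro a ha
      simp only [wappend, alph, Set.mem_setOf_eq] at ha
      obtain ⟨n, hn⟩ := ha
      split at hn
      · exact Or.inl (hn ▸ List.get_mem _ _ : a ∈ u)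
      · exact Or.inr ⟨_, hn⟩

lemma alph_subset_wappend (u : List Γ) (α : Word Γ) :
    alph α ⊆ alph (wappend u α) := by
  cases α with
  | inl w =>
      intro a ha
      simp only [alph, Set.mem_setOf_eq] at ha ⊢
      simp only [wappend]
      simp [ha]
  | inr f =>
      rintro a ⟨n, hn⟩
      refine ⟨n + u.length, ?_⟩
      simp only [wappend]
      rw [dif_neg (by omega)]
      simpa using hn

lemma mem_alph_wappend_left {c : Γ} {u : List Γ} (α : Word Γ) (hc : c ∈ u) :
    c ∈ alph (wappend u α) := by
  cases α with
  | inl w => simp only [wappend, alph, Set.mem_setOf_eq, List.mem_append]; exact Or.inl hc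
  | inr f =>
      obtain ⟨n, hn⟩ := List.mem_iff_get.mp hc
      exact ⟨n.1, by simp only [wappend]; rw [dif_pos n.2]; exact hn⟩

/-- values of an `inr`-word with a finite part prepended -/
lemma wappend_inr_apply (u : List Γ) (f : ℕ → Γ) :
    wappend u (Sum.inr f) = Sum.inr (fun n =>
      if h : n < u.length then u.get ⟨n, h⟩ else f (n - u.length)) := rfl

lemma omegaPow_nil : omegaPow ([] : List Γ) = Sum.inl [] := rfl

lemma omegaPow_ne_nil {z : List Γ} (hz : z ≠ []) :
    omegaPow z = Sum.inr (fun n => z.get ⟨n % z.length, Nat.mod_lt n (List.length_pos_iff.mpr hz)⟩) := by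
  cases z with
  | nil => exact absurd rfl hz
  | cons a l => rfl

end InfWords
namespace InfWords

variable {Γ : Type}

lemma getElem_congr_idx {l : List Γ} {i j : ℕ} (h : i = j) (h1 : i < l.length)
    (h2 : j < l.length) : l[i]'h1 = l[j]'h2 := by subst h; rfl

lemma partialProd_succ (u : List Γ) (v : ℕ → List Γ) (n : ℕ) :
    partialProd u v (n+1) = partialProd u v n ++ v n := by
  simp [partialProd, List.range_succ, List.append_assoc]

lemma partialProd_zero (u : List Γ) (v : ℕ → List Γ) : partialProd u v 0 = u := by
  simp [partialProd]

/-- segment of a function as a list -/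
def seg (g : ℕ → Γ) (a b : ℕ) : List Γ := (List.range' a (b - a)).map g

lemma seg_length (g : ℕ → Γ) (a b : ℕ) : (seg g a b).length = b - a := by simp [seg]

lemma seg_getElem (g : ℕ → Γ) (a b i : ℕ) (h : i < (seg g a b).length) :
    (seg g a b)[i] = g (a + i) := by
  simp only [seg, List.getElem_map, List.getElem_range']
  simp

lemma seg_append (g : ℕ → Γ) {a b c : ℕ} (hab : a ≤ b) (hbc : b ≤ c) :
    seg g a b ++ seg g b c = seg g a c := by
  have h := List.range'_append (s := a) (m := b-a) (n := c-b) (step := 1)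
  simp only [one_mul] at h
  rw [seg, seg, seg, ← List.map_append]
  rw [show a + (b - a) = b by omega] at h
  rw [show (b - a) + (c - b) = c - a by omega] at h
  rw [h]

lemma partialProd_add (u : List Γ) (v : ℕ → List Γ) (j k : ℕ) :
    partialProd u v (j + k) = partialProd u v j ++ ((List.range' j k).map v).flatten := by
  induction k with
  | zero => simp
  | succ l ih =>
      have h1 : j + (l + 1) = (j + l) + 1 := by omega
      rw [h1, partialProd_succ, ih]
      have h2 : List.range' j (l+1) = List.range' j l ++ [j + l] := by
        have h3 := List.range'_append (s := j) (m := l) (n := 1) (step := 1)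
        simp only [one_mul] at h3
        rw [← h3]
        simp [List.range'_one]
      rw [h2]
      simp [List.append_assoc]

lemma partialProd_prefix_le (u : List Γ) (v : ℕ → List Γ) {j k : ℕ} (h : j ≤ k) :
    partialProd u v j <+: partialProd u v k := by
  rw [show k = j + (k - j) by omega, partialProd_add]
  exact List.prefix_append _ _

lemma flatten_replicate_length (z : List Γ) (n : ℕ) :
    ((List.replicate n z).flatten).length = n * z.length := by
  induction n with
  | zero => simp
  | succ m ih => simp only [List.replicate_succ, List.flatten_cons, List.length_append, ih]; ring

lemma flatten_replicate_getElem (z : List Γ) (n i : ℕ) (h : i < ((List.replicate n z).flatten).length)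
    (hz : z ≠ []) :
    ((List.replicate n z).flatten)[i] = z[i % z.length]'(Nat.mod_lt i (List.length_pos_iff.mpr hz)) := by
  induction n generalizing i with
  | zero => simp at h
  | succ m ih =>
      have hlen : z.length > 0 := List.length_pos_iff.mpr hz
      have h' : i < (m+1) * z.length := by rwa [flatten_replicate_length] at h
      simp only [List.replicate_succ, List.flatten_cons]
      rcases Nat.lt_or_ge i z.length with h1 | h1
      · rw [List.getElem_append_left h1]
        exact getElem_congr_idx (Nat.mod_eq_of_lt h1).symm _ _
      · rw [List.getElem_append_right h1]
        rw [ih (i - z.length) (by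
          rw [flatten_replicate_length]
          have hh : (m+1)*z.length = m*z.length + z.length := by ring
          omega)]
        exact getElem_congr_idx (Nat.mod_eq_sub_mod h1).symm _ _

lemma range_map_const (n : ℕ) (z : List Γ) :
    (List.range n).map (fun _ => z) = List.replicate n z := by
  rw [List.map_const']; simp

lemma partialProd_const (u : List Γ) (z : List Γ) (n : ℕ) :
    partialProd u (fun _ => z) n = u ++ (List.replicate n z).flatten := by
  rw [partialProd, range_map_const]

lemma partialProd_const_length (u : List Γ) (z : List Γ) (n : ℕ) :
    (partialProd u (fun _ => z) n).length = u.length + n * z.length := by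
  rw [partialProd_const, List.length_append, flatten_replicate_length]

lemma getElem_congr_list {l l' : List Γ} (h : l = l') (h1 : i < l.length)
    (h2 : i < l'.length) : l[i]'h1 = l'[i]'h2 := by subst h; rfl

lemma isPre_inr_iff (u : List Γ) (f : ℕ → Γ) :
    IsPre u (Sum.inr f) ↔ ∀ (i : ℕ) (h : i < u.length), u[i] = f i := by
  constructor
  · intro hp i h
    have := hp ⟨i, h⟩
    simpa [List.get_eq_getElem] using this
  · intro hp i
    simp only [List.get_eq_getElem]
    exact hp i.1 i.2

/-- The master lemma: `u z^ω` is the infinite product `u z z z ⋯`. -/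
lemma isInfProd_const (u z : List Γ) :
    IsInfProd u (fun _ => z) (wappend u (omegaPow z)) := by
  rcases eq_or_ne z [] with hz | hz
  · subst hz
    rw [omegaPow_nil, wappend_inl]
    constructor
    · intro n; rw [partialProd_const]; simp
    · exact ⟨0, by rw [partialProd_const]; simp⟩
  · rw [omegaPow_ne_nil hz, wappend_inr_apply]
    have hlen : z.length > 0 := List.length_pos_iff.mpr hz
    constructor
    · intro n
      rw [isPre_inr_iff]
      intro i hi
      have hi' : i < (u ++ (List.replicate n z).flatten).length := by
        rwa [partialProd_const] at hi
      have hrw := getElem_congr_list (partialProd_const u z n) hi hi'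
      rw [hrw]
      have hi2 : i < u.length + n * z.length := by
        simpa [List.length_append, flatten_replicate_length] using hi'
      rcases Nat.lt_or_ge i u.length with h1 | h1
      · rw [List.getElem_append_left h1, dif_pos h1]
        simp [List.get_eq_getElem]
      · rw [List.getElem_append_right h1, dif_neg (by omega)]
        rw [flatten_replicate_getElem z n _ (by rw [flatten_replicate_length]; omega) hz]
        simp [List.get_eq_getElem]
    · intro k
      refine ⟨k + 1, ?_⟩
      rw [partialProd_const_length]
      nlinarith

lemma wappend_omegaPow_absorb (z : List Γ) :
    wappend z (omegaPow z) = omegaPow z := by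
  rcases eq_or_ne z [] with hz | hz
  · subst hz; rfl
  · rw [omegaPow_ne_nil hz, wappend_inr_apply]
    have hlen : z.length > 0 := List.length_pos_iff.mpr hz
    congr 1
    funext n
    rcases Nat.lt_or_ge n z.length with h1 | h1
    · rw [dif_pos h1]
      simp only [List.get_eq_getElem]
      exact getElem_congr_idx (by rw [Nat.mod_eq_of_lt h1]) _ _
    · rw [dif_neg (by omega)]
      simp only [List.get_eq_getElem]
      exact getElem_congr_idx (by rw [Nat.mod_eq_sub_mod h1]) _ _

lemma wappend_flatten_replicate_absorb (z : List Γ) (k : ℕ) :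
    wappend ((List.replicate k z).flatten) (omegaPow z) = omegaPow z := by
  induction k with
  | zero => cases homega : omegaPow z <;> simp [wappend]
  | succ m ih =>
      have h : (List.replicate (m+1) z).flatten = z ++ (List.replicate m z).flatten := by
        simp [List.replicate_succ]
      rw [h, wappend_assoc, ih, wappend_omegaPow_absorb]

lemma omegaPow_flatten_replicate (z : List Γ) {k : ℕ} (hk : 0 < k) :
    omegaPow ((List.replicate k z).flatten) = omegaPow z := by
  rcases eq_or_ne z [] with hz | hz
  · subst hz; simp
  · have hlen : z.length > 0 := List.length_pos_iff.mpr hz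
    have hpos : 0 < ((List.replicate k z).flatten).length := by
      rw [flatten_replicate_length]; exact Nat.mul_pos hk hlen
    have hne : (List.replicate k z).flatten ≠ [] := List.length_pos_iff.mp hpos
    rw [omegaPow_ne_nil hz, omegaPow_ne_nil hne]
    congr 1
    funext n
    simp only [List.get_eq_getElem]
    rw [flatten_replicate_getElem z k _ (Nat.mod_lt n hpos) hz]
    apply getElem_congr_idx
    rw [Nat.mod_mod_of_dvd n (by rw [flatten_replicate_length]; exact dvd_mul_left z.length k)]

/-- Cancellation of a common-prefix decomposition. -/
lemma wappend_cancel {w₁ w₂ : List Γ} {γ₁ γ₂ : Word Γ}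
    (h : wappend w₁ γ₁ = wappend w₂ γ₂) (hle : w₁.length ≤ w₂.length) :
    ∃ d, w₂ = w₁ ++ d ∧ γ₁ = wappend d γ₂ := by
  cases γ₁ with
  | inl x₁ =>
      cases γ₂ with
      | inl x₂ =>
          rw [wappend_inl, wappend_inl] at h
          have h' : w₁ ++ x₁ = w₂ ++ x₂ := Sum.inl.inj h
          have hp1 : w₁ <+: w₂ ++ x₂ := by rw [← h']; exact List.prefix_append _ _
          have hpre : w₁ <+: w₂ := List.prefix_of_prefix_length_le hp1 (List.prefix_append _ _) hle
          obtain ⟨d, hd⟩ := hpre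
          refine ⟨d, hd.symm, ?_⟩
          rw [← hd, List.append_assoc] at h'
          rw [wappend_inl, List.append_cancel_left h']
      | inr g₂ => exact absurd h (by rw [wappend_inl, wappend_inr_apply]; simp)
  | inr g₁ =>
      cases γ₂ with
      | inl x₂ => exact absurd h (by rw [wappend_inl, wappend_inr_apply]; simp)
      | inr g₂ =>
          rw [wappend_inr_apply, wappend_inr_apply] at h
          have happ : ∀ n, (if h : n < w₁.length then w₁.get ⟨n, h⟩ else g₁ (n - w₁.length)) =
              (if h : n < w₂.length then w₂.get ⟨n, h⟩ else g₂ (n - w₂.length)) :=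
            fun n => congrFun (Sum.inr.inj h) n
          refine ⟨w₂.drop w₁.length, ?_, ?_⟩
          · refine (List.ext_getElem (by simp [List.length_drop]; omega) ?_).symm
            intro n h₁ h₂
            rcases Nat.lt_or_ge n w₁.length with hn | hn
            · rw [List.getElem_append_left hn]
              have h3 := happ n
              rw [dif_pos hn, dif_pos (by omega)] at h3
              simpa [List.get_eq_getElem] using h3
            · rw [List.getElem_append_right hn, List.getElem_drop]
              exact getElem_congr_idx (by omega) _ _
          · rw [wappend_inr_apply]
            congr 1
            funext n
            have h3 := happ (n + w₁.length)
            rw [dif_neg (by omega)] at h3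
            simp only [Nat.add_sub_cancel] at h3
            rw [h3]
            rcases Nat.lt_or_ge (n + w₁.length) w₂.length with hn | hn
            · rw [dif_pos hn, dif_pos (by simp [List.length_drop]; omega)]
              simp only [List.get_eq_getElem, List.getElem_drop]
              exact getElem_congr_idx (by omega) _ _
            · rw [dif_neg (by omega), dif_neg (by simp [List.length_drop]; omega)]
              congr 1
              simp only [List.length_drop]
              omega

end InfWords
namespace InfWords

variable {Γ : Type} {L : Set (Word Γ)}

lemma omega_rot (x u y : List Γ) :
    wappend x (omegaPow (u ++ y)) = wappend (x ++ u) (omegaPow (y ++ u)) := by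
  rcases eq_or_ne (u ++ y) ([] : List Γ) with hz | hz
  · have hu : u = [] := by cases u <;> simp_all
    have hy : y = [] := by simp [hu] at hz; exact hz
    subst hu; subst hy
    simp [omegaPow_nil, wappend_inl]
  · have hz' : y ++ u ≠ [] := by
      intro hcon
      have : u = [] ∧ y = [] := by
        constructor <;> [cases u; cases y] <;> simp_all
      simp [this.1, this.2] at hz
    have hL : 0 < u.length + y.length := by
      rcases (List.length_pos_iff.mpr hz) with h
      simpa [List.length_append] using h
    rw [omegaPow_ne_nil hz, omegaPow_ne_nil hz', wappend_inr_apply, wappend_inr_apply]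
    congr 1
    funext n
    set Lq := u.length + y.length with hLq
    have hlen1 : (u ++ y).length = Lq := by simp [List.length_append]; omega
    have hlen2 : (y ++ u).length = Lq := by simp [List.length_append]; omega
    -- key: ∀ m, (u++y)[(m + |u|) % Lq] = (y++u)[m % Lq]
    have key : ∀ (m : ℕ) (h1 : (m + u.length) % (u++y).length < (u++y).length)
        (h2 : m % (y++u).length < (y++u).length),
        (u ++ y)[(m + u.length) % (u++y).length]'h1 = (y ++ u)[m % (y++u).length]'h2 := by
      intro m h1 h2
      set r := m % Lq with hr
      have hrlt : r < Lq := Nat.mod_lt m hL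
      have e1 : (m + u.length) % (u++y).length = (r + u.length) % Lq := by
        rw [hlen1, hr, Nat.mod_add_mod]
      have e2 : m % (y++u).length = r := by rw [hlen2]
      rcases Nat.lt_or_ge r y.length with hc | hc
      · have e3 : (r + u.length) % Lq = r + u.length := Nat.mod_eq_of_lt (by omega)
        have h1' : (m + u.length) % (u++y).length = r + u.length := by rw [e1, e3]
        rw [getElem_congr_idx h1' h1 (by omega ), getElem_congr_idx e2 h2 (by omega)]
        rw [List.getElem_append_right (by omega), List.getElem_append_left hc]
        exact getElem_congr_idx (by omega) _ _
      · have e3 : (r + u.length) % Lq = r - y.length := by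
          rw [Nat.mod_eq_sub_mod (by omega), Nat.mod_eq_of_lt (by omega)]
          omega
        have h1' : (m + u.length) % (u++y).length = r - y.length := by rw [e1, e3]
        rw [getElem_congr_idx h1' h1 (by omega), getElem_congr_idx e2 h2 (by omega)]
        rw [List.getElem_append_left (by omega), List.getElem_append_right (by omega)]
        all_goals exact getElem_congr_idx (by omega) _ _
    rcases Nat.lt_or_ge n x.length with hn1 | hn1
    · rw [dif_pos hn1, dif_pos (by simp [List.length_append]; omega)]
      simp only [List.get_eq_getElem]
      rw [List.getElem_append_left hn1]
    rcases Nat.lt_or_ge n (x.length + u.length) with hn2 | hn2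
    · rw [dif_neg (by omega), dif_pos (by simp [List.length_append]; omega)]
      simp only [List.get_eq_getElem]
      rw [List.getElem_append_right (by omega : x.length ≤ n)]
      have h1 : (n - x.length) % (u ++ y).length = n - x.length := by
        apply Nat.mod_eq_of_lt; rw [hlen1]; omega
      rw [getElem_congr_idx h1 _ (by rw [hlen1]; omega)]
      rw [List.getElem_append_left (by omega)]
      all_goals exact getElem_congr_idx (by omega) _ _
    · rw [dif_neg (by omega), dif_neg (by simp [List.length_append]; omega)]
      simp only [List.get_eq_getElem]
      have hm : n - x.length = (n - (x.length + u.length)) + u.length := by omega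
      have h2' : n - (x ++ u).length = n - (x.length + u.length) := by
        simp [List.length_append]
      rw [getElem_congr_idx (by rw [hm]) _ (by
        rw [hlen1]; exact Nat.mod_lt _ (by omega))]
      rw [getElem_congr_idx (congrArg (· % (y ++ u).length) h2') _ (by
        rw [hlen2]; exact Nat.mod_lt _ (by omega))]
      exact key _ _ _

lemma synLe_refl (u : List Γ) : synLe L u u := fun _ _ _ => ⟨id, id⟩

lemma synLe_trans {u v w : List Γ} (h1 : synLe L u v) (h2 : synLe L v w) : synLe L u w :=
  fun x y z => ⟨fun hm => (h1 x y z).1 ((h2 x y z).1 hm), fun hm => (h1 x y z).2 ((h2 x y z).2 hm)⟩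

lemma synEq_refl (u : List Γ) : synEq L u u := ⟨synLe_refl u, synLe_refl u⟩

lemma synEq_symm {u v : List Γ} (h : synEq L u v) : synEq L v u := ⟨h.2, h.1⟩

lemma synEq_trans {u v w : List Γ} (h1 : synEq L u v) (h2 : synEq L v w) : synEq L u w :=
  ⟨synLe_trans h1.1 h2.1, synLe_trans h2.2 h1.2⟩

lemma synLe_append {u u' v v' : List Γ} (hu : synLe L u u') (hv : synLe L v v') :
    synLe L (u ++ v) (u' ++ v') := by
  intro x y z
  constructor
  · intro hm
    have e1 : x ++ (u' ++ v') ++ y = x ++ u' ++ (v' ++ y) := by simp [List.append_assoc]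
    rw [e1] at hm
    have hm2 := (hu x (v' ++ y) z).1 hm
    have e2 : x ++ u ++ (v' ++ y) = (x ++ u) ++ v' ++ y := by simp [List.append_assoc]
    rw [e2] at hm2
    have hm3 := (hv (x ++ u) y z).1 hm2
    have e3 : x ++ u ++ v ++ y = x ++ (u ++ v) ++ y := by simp [List.append_assoc]
    rwa [e3] at hm3
  · intro hm
    have e1 : u' ++ v' ++ y = u' ++ (v' ++ y) := by simp [List.append_assoc]
    rw [e1] at hm
    have hm2 := (hu x (v' ++ y) z).2 hm
    rw [omega_rot x u (v' ++ y)] at hm2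
    have e2 : v' ++ y ++ u = v' ++ (y ++ u) := by simp [List.append_assoc]
    rw [e2] at hm2
    have hm3 := (hv (x ++ u) (y ++ u) z).2 hm2
    have e3 : v ++ (y ++ u) = (v ++ y) ++ u := by simp [List.append_assoc]
    rw [e3, ← omega_rot x u (v ++ y)] at hm3
    have e4 : u ++ (v ++ y) = u ++ v ++ y := by simp [List.append_assoc]
    rwa [e4] at hm3

lemma synEq_append {u u' v v' : List Γ} (hu : synEq L u u') (hv : synEq L v v') :
    synEq L (u ++ v) (u' ++ v') :=
  ⟨synLe_append hu.1 hv.1, synLe_append hu.2 hv.2⟩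

lemma synEq_flatten {l : List (List Γ)} {b : List Γ} (hl : l ≠ [])
    (hw : ∀ w ∈ l, synEq L w b) (hbb : synEq L (b ++ b) b) : synEq L l.flatten b := by
  induction l with
  | nil => exact absurd rfl hl
  | cons w l ih =>
      rcases eq_or_ne l [] with h | h
      · subst h
        simpa using hw w (by simp)
      · rw [List.flatten_cons]
        have h1 : synEq L (w ++ l.flatten) (b ++ b) :=
          synEq_append (hw w (by simp)) (ih h (fun w' hw' => hw w' (by simp [hw'])))
        exact synEq_trans h1 hbb

lemma synEq_pow_absorb {s z : List Γ} (hsz : synEq L (s ++ z) s) (k : ℕ) :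
    synEq L (s ++ (List.replicate k z).flatten) s := by
  induction k generalizing s with
  | zero => simpa using synEq_refl s
  | succ m ih =>
      have e1 : s ++ (List.replicate (m+1) z).flatten = (s ++ z) ++ (List.replicate m z).flatten := by
        simp [List.replicate_succ, List.append_assoc]
      rw [e1]
      have h1 : synEq L ((s ++ z) ++ (List.replicate m z).flatten) (s ++ (List.replicate m z).flatten) :=
        synEq_append hsz (synEq_refl _)
      exact synEq_trans h1 (ih hsz)

lemma synEq_partialProd {u : List Γ} {v : ℕ → List Γ} {a b : List Γ}
    (hu : synEq L u a) (hv : ∀ i, synEq L (v i) b) (hab : synEq L (a ++ b) a) :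
    ∀ n, synEq L (partialProd u v n) a := by
  intro n
  induction n with
  | zero => rw [partialProd_zero]; exact hu
  | succ m ih =>
      rw [partialProd_succ]
      exact synEq_trans (synEq_append ih (hv m)) hab

lemma alph_omegaPow_subset (z : List Γ) : alph (omegaPow z) ⊆ {a | a ∈ z} := by
  rcases eq_or_ne z [] with hz | hz
  · subst hz; rw [omegaPow_nil]; intro a ha; simpa [alph] using ha
  · rw [omegaPow_ne_nil hz]
    rintro a ⟨n, hn⟩
    exact hn ▸ (List.get_mem _ _ : _ ∈ z)

end InfWords

namespace InfWordsAux

lemma inf_fiber {C : Type} [Finite C] {S : Set ℕ} (hS : S.Infinite) (f : ℕ → C) :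
    ∃ k, (S ∩ f ⁻¹' {k}).Infinite := by
  by_contra hcon
  push_neg at hcon
  have : S.Finite := by
    have h2 : S ⊆ ⋃ k ∈ (Set.univ : Set C), (S ∩ f ⁻¹' {k}) := by
      intro x hx
      exact Set.mem_biUnion (Set.mem_univ (f x)) ⟨hx, rfl⟩
    exact (Set.Finite.biUnion Set.finite_univ (fun k _ => hcon k)).subset h2
  exact hS this

lemma step_ex {C : Type} [Finite C] (c : ℕ → ℕ → C) (S : Set ℕ) (hS : S.Infinite) :
    ∃ p : ℕ × Set ℕ, p.1 ∈ S ∧ p.2 ⊆ S ∧ p.2.Infinite ∧ (∀ x ∈ p.2, p.1 < x) ∧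
      (∀ x ∈ p.2, ∀ y ∈ p.2, c p.1 x = c p.1 y) := by
  obtain ⟨a, ha⟩ := hS.nonempty
  have h1 : (S ∩ Set.Ioi a).Infinite := by
    have : S \ Set.Iic a = S ∩ Set.Ioi a := by
      ext x; simp [Set.mem_diff, Set.mem_Iic, Set.mem_Ioi, not_le]
    rw [← this]; exact hS.diff (Set.finite_Iic a)
  obtain ⟨k, hk⟩ := inf_fiber h1 (c a)
  refine ⟨(a, S ∩ Set.Ioi a ∩ c a ⁻¹' {k}), ha, ?_, hk, ?_, ?_⟩
  · intro x hx; exact hx.1.1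
  · intro x hx; exact hx.1.2
  · intro x hx y hy
    have hx' : c a x = k := hx.2
    have hy' : c a y = k := hy.2
    rw [hx', hy']

noncomputable def chainF {C : Type} [Finite C] (c : ℕ → ℕ → C) : ℕ → {p : ℕ × Set ℕ // p.2.Infinite}
  | 0 => ⟨(0, Set.univ), Set.infinite_univ⟩
  | n + 1 =>
    let prev := chainF c n
    let he := step_ex c prev.1.2 prev.2
    ⟨he.choose, he.choose_spec.2.2.1⟩

lemma chainF_spec {C : Type} [Finite C] (c : ℕ → ℕ → C) (n : ℕ) :
    (chainF c (n+1)).1.1 ∈ (chainF c n).1.2 ∧ (chainF c (n+1)).1.2 ⊆ (chainF c n).1.2 ∧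
    (∀ x ∈ (chainF c (n+1)).1.2, (chainF c (n+1)).1.1 < x) ∧
    (∀ x ∈ (chainF c (n+1)).1.2, ∀ y ∈ (chainF c (n+1)).1.2,
        c (chainF c (n+1)).1.1 x = c (chainF c (n+1)).1.1 y) := by
  have h := (step_ex c (chainF c n).1.2 (chainF c n).2).choose_spec
  exact ⟨h.1, h.2.1, h.2.2.2.1, h.2.2.2.2⟩

lemma chainF_anti {C : Type} [Finite C] (c : ℕ → ℕ → C) {i j : ℕ} (hij : i ≤ j) :
    (chainF c j).1.2 ⊆ (chainF c i).1.2 := by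
  induction j with
  | zero => simp_all
  | succ n ih =>
    rcases Nat.lt_or_ge i (n+1) with h | h
    · exact ((chainF_spec c n).2.1).trans (ih (Nat.lt_succ_iff.mp h))
    · have : i = n + 1 := le_antisymm hij h
      subst this; rfl

/-- Infinite Ramsey theorem for pairs (upper colorings). -/
theorem ramsey_pairs {C : Type} [Finite C] (c : ℕ → ℕ → C) :
    ∃ (φ : ℕ → ℕ) (q : C), StrictMono φ ∧ ∀ i j, i < j → c (φ i) (φ j) = q := by
  classical
  set a : ℕ → ℕ := fun n => (chainF c (n+1)).1.1 with ha
  have hmem : ∀ n, a n ∈ (chainF c n).1.2 := fun n => (chainF_spec c n).1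
  have hmono : StrictMono a := by
    apply strictMono_nat_of_lt_succ
    intro n
    exact (chainF_spec c n).2.2.1 _ (hmem (n+1))
  -- the color of level i
  set d : ℕ → C := fun i => c (a i) (a (i+1)) with hd
  have hcol : ∀ i j, i < j → c (a i) (a j) = d i := by
    intro i j hij
    have h1 : a j ∈ (chainF c (i+1)).1.2 := chainF_anti c hij (hmem j)
    exact (chainF_spec c i).2.2.2 _ h1 _ (hmem (i+1))
  obtain ⟨q, hq⟩ := inf_fiber (Set.infinite_univ (α := ℕ)) d
  have hq' : {i | d i = q}.Infinite := by
    apply hq.mono; intro x hx; exact hx.2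
  refine ⟨a ∘ Nat.nth (fun i => d i = q), q, hmono.comp (Nat.nth_strictMono hq'), ?_⟩
  intro i j hij
  have hn : Nat.nth (fun i => d i = q) i < Nat.nth (fun i => d i = q) j :=
    Nat.nth_strictMono hq' hij
  have := hcol _ _ hn
  simp only [Function.comp] at this ⊢
  rw [this, Nat.nth_mem_of_infinite hq' i]

/-- Idempotent power in a finite monoid. -/
theorem exists_idem_pow {M : Type} [Monoid M] [Finite M] (m : M) :
    ∃ k, 0 < k ∧ m ^ k * m ^ k = m ^ k := by
  obtain ⟨i, j, hij, h⟩ := Finite.exists_ne_map_eq_of_infinite (fun n : ℕ => m ^ (n + 1))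
  wlog hlt : i < j generalizing i j
  · exact this j i hij.symm h.symm (by omega)
  -- m^(i+1) = m^(j+1), period d = j - i
  set d := j - i with hdd
  have hd : 0 < d := by omega
  have hper : ∀ n, i + 1 ≤ n → m ^ n = m ^ (n + d) := by
    intro n hn
    have : m ^ n = m ^ (i+1) * m ^ (n - (i+1)) := by
      rw [← pow_add]; congr 1; omega
    rw [this, h]
    rw [← pow_add]; congr 1; omega
  have hper' : ∀ n k, i + 1 ≤ n → m ^ n = m ^ (n + k * d) := by
    intro n k hn
    induction k with
    | zero => simp
    | succ l ih =>
      rw [ih, hper (n + l * d) (by omega)]; congr 1; ring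
  refine ⟨(i+1) * d, by positivity, ?_⟩
  rw [← pow_add]
  exact (hper' ((i+1)*d) (i+1) (by nlinarith)).symm

end InfWordsAux
namespace InfWords

variable {Γ : Type} {L : Set (Word Γ)} {M : Type} [Monoid M]

lemma hom_flatten {h : List Γ → M} (hh : IsHom h) (l : List (List Γ)) :
    h l.flatten = (l.map h).prod := by
  induction l with
  | nil => simpa using hh.map_one
  | cons w l ih => rw [List.flatten_cons, hh.map_mul, ih, List.map_cons, List.prod_cons]

lemma hom_pow {h : List Γ → M} (hh : IsHom h) (z : List Γ) (k : ℕ) :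
    h ((List.replicate k z).flatten) = (h z) ^ k := by
  rw [hom_flatten hh, List.map_replicate, List.prod_replicate]

/-- Strong recognition: a pair set touching `L` is contained in `L`. -/
lemma pairSet_subset {h : List Γ → M} (hrec : StronglyRecognizes h L) {p q : M}
    (hlink : LinkedPair p q) {γ : Word Γ} (hmem : γ ∈ pairSet h p q) (hL : γ ∈ L) :
    pairSet h p q ⊆ L := by
  intro δ hδ
  rw [hrec]
  exact Set.mem_iUnion.mpr ⟨p, Set.mem_iUnion.mpr ⟨q,
    Set.mem_iUnion.mpr ⟨⟨hlink, γ, hmem, hL⟩, hδ⟩⟩⟩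

lemma mem_pairSet_omega {h : List Γ → M} (x z : List Γ) :
    wappend x (omegaPow z) ∈ pairSet h (h x) (h z) :=
  ⟨x, fun _ => z, rfl, fun _ => rfl, isInfProd_const x z⟩

/-- `x z^ω` lies in the pair set of `(h x * (h z)^k, (h z)^k)` for any `k > 0`. -/
lemma mem_pairSet_omega_pow {h : List Γ → M} (hh : IsHom h) (x z : List Γ) {k : ℕ} (hk : 0 < k) :
    wappend x (omegaPow z) ∈ pairSet h (h x * (h z) ^ k) ((h z) ^ k) := by
  set blk := (List.replicate k z).flatten with hblk
  have he : wappend (x ++ blk) (omegaPow blk) = wappend x (omegaPow z) := by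
    rw [omegaPow_flatten_replicate z hk, wappend_assoc, wappend_flatten_replicate_absorb]
  have h1 : h (x ++ blk) = h x * (h z) ^ k := by rw [hh.map_mul, hom_pow hh]
  have := mem_pairSet_omega (h := h) (x ++ blk) blk
  rw [he, h1, hom_pow hh] at this
  exact this

lemma linked_pow {p q : M} (hq : q * q = q) : LinkedPair (p * q) q :=
  ⟨by rw [mul_assoc, hq], hq⟩

/-- Words with the same image under a strongly recognizing hom are syntactically equivalent. -/
lemma synLe_of_hom_eq {h : List Γ → M} [Finite M] (hh : IsHom h)
    (hrec : StronglyRecognizes h L) {u v : List Γ} (huv : h u = h v) : synLe L u v := by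
  intro x y z
  constructor
  · intro hm
    obtain ⟨k, hk, hidem⟩ := InfWordsAux.exists_idem_pow (h z)
    have h1 : h (x ++ v ++ y) = h (x ++ u ++ y) := by
      rw [hh.map_mul, hh.map_mul, hh.map_mul, hh.map_mul, huv]
    have hmemv := mem_pairSet_omega_pow (h := h) hh (x ++ v ++ y) z hk
    have hmemu := mem_pairSet_omega_pow (h := h) hh (x ++ u ++ y) z hk
    rw [h1] at hmemv
    exact pairSet_subset hrec (linked_pow hidem) hmemv hm hmemu
  · intro hm
    have h0 : h (v ++ y) = h (u ++ y) := by rw [hh.map_mul, hh.map_mul, huv]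
    obtain ⟨k, hk, hidem⟩ := InfWordsAux.exists_idem_pow (h (v ++ y))
    have hmemv := mem_pairSet_omega_pow (h := h) hh x (v ++ y) hk
    have hmemu := mem_pairSet_omega_pow (h := h) hh x (u ++ y) hk
    rw [← h0] at hmemu
    exact pairSet_subset hrec (linked_pow hidem) hmemv hm hmemu

lemma synEq_of_hom_eq {h : List Γ → M} [Finite M] (hh : IsHom h)
    (hrec : StronglyRecognizes h L) {u v : List Γ} (huv : h u = h v) : synEq L u v :=
  ⟨synLe_of_hom_eq hh hrec huv, synLe_of_hom_eq hh hrec huv.symm⟩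

end InfWords
namespace InfWords

variable {Γ : Type} {L : Set (Word Γ)} {M : Type} [Monoid M]

lemma flatten_replicate_nil (n : ℕ) : (List.replicate n ([] : List Γ)).flatten = [] := by
  induction n <;> simp_all [List.replicate_succ]

/-- Ramsey factorization of an element of a syntactic pair set. -/
lemma pairSetSyn_ramsey [Finite M] {h : List Γ → M} (hh : IsHom h)
    {a b : List Γ} (hab : synEq L (a ++ b) a) (hbb : synEq L (b ++ b) b)
    {β : Word Γ} (hβ : β ∈ pairSetSyn L a b) :
    ∃ x y : List Γ, synEq L x a ∧ synEq L y b ∧ h x * h y = h x ∧ h y * h y = h y ∧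
      β ∈ pairSet h (h x) (h y) := by
  obtain ⟨u, v, hu, hv, hprod⟩ := hβ
  cases β with
  | inl w =>
      obtain ⟨hpre, n₀, hn₀⟩ := hprod
      have hvn : v n₀ = [] := by
        have h1 : partialProd u v (n₀ + 1) <+: w := hpre (n₀ + 1)
        rw [partialProd_succ, hn₀] at h1
        have h2 := h1.length_le
        simp only [List.length_append] at h2
        exact List.length_eq_zero_iff.mp (by omega)
      refine ⟨w, [], ?_, ?_, ?_, ?_, ?_⟩
      · exact hn₀ ▸ synEq_partialProd hu hv hab n₀
      · exact hvn ▸ hv n₀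
      · rw [hh.map_one, mul_one]
      · rw [hh.map_one, mul_one]
      · refine ⟨w, fun _ => [], rfl, fun _ => rfl, ?_, 0, ?_⟩
        · intro n
          rw [partialProd_const, flatten_replicate_nil]
          simp
        · rw [partialProd_const, flatten_replicate_nil]
          simp
  | inr g =>
      obtain ⟨hpre, hub⟩ := hprod
      set c : ℕ → ℕ → M := fun i j => h (((List.range' i (j - i)).map v).flatten) with hcdef
      obtain ⟨φ, q, hφ, hc⟩ := InfWordsAux.ramsey_pairs c
      have cmul : ∀ {i j k : ℕ}, i ≤ j → j ≤ k → c i j * c j k = c i k := by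
        intro i j k hij hjk
        rw [hcdef]
        simp only
        rw [← hh.map_mul, ← List.flatten_append, ← List.map_append]
        have h3 := List.range'_append (s := i) (m := j - i) (n := k - j) (step := 1)
        simp only [one_mul] at h3
        rw [show i + (j - i) = j by omega] at h3
        rw [show (j - i) + (k - j) = k - i by omega] at h3
        rw [h3]
      have hidem : q * q = q := by
        calc q * q = c (φ 0) (φ 1) * c (φ 1) (φ 2) := by
              rw [hc 0 1 (by omega), hc 1 2 (by omega)]
          _ = c (φ 0) (φ 2) := cmul (le_of_lt (hφ (by omega))) (le_of_lt (hφ (by omega)))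
          _ = q := hc 0 2 (by omega)
      set x := partialProd u v (φ 1) with hx
      set y := ((List.range' (φ 1) (φ 2 - φ 1)).map v).flatten with hy
      have hyq : h y = q := hc 1 2 (by omega)
      have hxq : h x * q = h x := by
        have e1 : partialProd u v (φ 1) =
            partialProd u v (φ 0) ++ ((List.range' (φ 0) (φ 1 - φ 0)).map v).flatten := by
          rw [← partialProd_add, show φ 0 + (φ 1 - φ 0) = φ 1 by
            have := hφ (show 0 < 1 by omega); omega]
        have e2 : h x = h (partialProd u v (φ 0)) * q := by
          rw [hx, e1, hh.map_mul]
          congr 1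
          exact hc 0 1 (by omega)
        rw [e2, mul_assoc, hidem]
      refine ⟨x, y, synEq_partialProd hu hv hab (φ 1), ?_, ?_, ?_, ?_⟩
      · apply synEq_flatten _ _ hbb
        · have h12 : φ 1 < φ 2 := hφ (by omega)
          intro hcon
          have hlen := congrArg List.length hcon
          simp at hlen
          omega
        · intro w hw
          obtain ⟨i, _, rfl⟩ := List.mem_map.mp hw
          exact hv i
      · rw [hyq]; exact hxq
      · rw [hyq]; exact hidem
      · rw [hyq]
        refine ⟨x, fun j => ((List.range' (φ (j+1)) (φ (j+2) - φ (j+1))).map v).flatten,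
          rfl, fun j => hc (j+1) (j+2) (by omega), ?_, ?_⟩
        · -- prefixes
          have hkey : ∀ n, partialProd x
              (fun j => ((List.range' (φ (j+1)) (φ (j+2) - φ (j+1))).map v).flatten) n =
              partialProd u v (φ (n+1)) := by
            intro n
            induction n with
            | zero => rw [partialProd_zero]
            | succ m ih =>
                rw [partialProd_succ, ih, ← partialProd_add]
                congr 1
                have h4 := hφ (show m + 1 < m + 2 by omega)
                have h5 : φ (m + 1 + 1) = φ (m + 2) := rfl
                omega
          intro n
          rw [hkey n]
          exact hpre (φ (n+1))
        · intro k
          obtain ⟨n, hn⟩ := hub k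
          refine ⟨n, ?_⟩
          have hkey : partialProd x
              (fun j => ((List.range' (φ (j+1)) (φ (j+2) - φ (j+1))).map v).flatten) n =
              partialProd u v (φ (n+1)) := by
            clear hn
            induction n with
            | zero => rw [partialProd_zero]
            | succ m ih =>
                rw [partialProd_succ, ih, ← partialProd_add]
                congr 1
                have h4 := hφ (show m + 1 < m + 2 by omega)
                have h5 : φ (m + 1 + 1) = φ (m + 2) := rfl
                omega
          rw [hkey]
          have hmono : n ≤ φ (n + 1) := by
            have h6 : n + 1 ≤ φ (n + 1) := hφ.le_apply
            omega
          have := (partialProd_prefix_le u v hmono).length_le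
          omega

/-- The key lemma: a syntactically-linked pair set touching `L` is contained in `L`. -/
lemma pairSetSyn_subset [Finite M] {h : List Γ → M} (hh : IsHom h)
    (hrec : StronglyRecognizes h L) {a b : List Γ}
    (hab : synEq L (a ++ b) a) (hbb : synEq L (b ++ b) b)
    (hne : (pairSetSyn L a b ∩ L).Nonempty) : pairSetSyn L a b ⊆ L := by
  obtain ⟨α, hαm, hαL⟩ := hne
  obtain ⟨x', y', hx'a, hy'b, hlink', hidem', hα⟩ := pairSetSyn_ramsey hh hab hbb hαm
  have hsub' : pairSet h (h x') (h y') ⊆ L :=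
    pairSet_subset hrec ⟨hlink', hidem'⟩ hα hαL
  intro β hβm
  obtain ⟨x, y, hxa, hyb, hlink, hidem, hβ⟩ := pairSetSyn_ramsey hh hab hbb hβm
  have hγ1 : wappend x' (omegaPow y') ∈ L := hsub' (mem_pairSet_omega x' y')
  have hyy' : synLe L y y' := synLe_trans hyb.1 hy'b.2
  have hγ2 : wappend x' (omegaPow y) ∈ L := by
    have h2 := (hyy' x' [] []).2
    rw [List.append_nil, List.append_nil] at h2
    exact h2 hγ1
  have hxx' : synLe L x x' := synLe_trans hxa.1 hx'a.2
  have hγ3 : wappend x (omegaPow y) ∈ L := by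
    have h3 := (hxx' [] [] y).1
    rw [show ([] ++ x' ++ [] : List Γ) = x' by simp,
        show ([] ++ x ++ [] : List Γ) = x by simp] at h3
    exact h3 hγ2
  exact pairSet_subset hrec ⟨hlink, hidem⟩ (mem_pairSet_omega x y) hγ3 hβ

end InfWords
namespace InfWords

variable {Γ : Type} {L : Set (Word Γ)}

lemma wappend_nil (α : Word Γ) : wappend [] α = α := by
  cases α with
  | inl w => rfl
  | inr f =>
      rw [wappend_inr_apply]
      congr 1

lemma isPre_prefix {w P : List Γ} {G : ℕ → Γ} (h1 : IsPre w (Sum.inr G))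
    (h2 : IsPre P (Sum.inr G)) (hle : w.length ≤ P.length) : w <+: P := by
  rw [isPre_inr_iff] at h1 h2
  refine ⟨P.drop w.length, ?_⟩
  apply List.ext_getElem (by simp; omega)
  intro n hn1 hn2
  rcases Nat.lt_or_ge n w.length with hn | hn
  · rw [List.getElem_append_left hn, h1 n hn, h2 n (by omega)]
  · rw [List.getElem_append_right hn, List.getElem_drop]
    exact getElem_congr_idx (by omega) _ _

lemma cone_mono {w : List Γ} {A B : Set Γ} (hAB : A ⊆ B) : cone w A ⊆ cone w B := by
  rintro δ ⟨γ, hγ, rfl⟩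
  exact ⟨γ, fun a ha => hAB (hγ ha), rfl⟩

lemma cone_inter_aux {β : Word Γ} {w₁ w₂ : List Γ} {A₁ A₂ : Set Γ}
    (h1 : β ∈ cone w₁ A₁) (h2 : β ∈ cone w₂ A₂) (hle : w₁.length ≤ w₂.length) :
    β ∈ cone w₂ (A₁ ∩ A₂) ∧ cone w₂ (A₁ ∩ A₂) ⊆ cone w₁ A₁ ∩ cone w₂ A₂ := by
  obtain ⟨γ₁, hγ₁, hce1⟩ := h1
  obtain ⟨γ₂, hγ₂, hce2⟩ := h2
  obtain ⟨d, hw₂, hγ₁d⟩ := wappend_cancel (hce1.trans hce2.symm) hle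
  have hγ₂A₁ : alph γ₂ ⊆ A₁ := by
    intro a ha
    exact hγ₁ (hγ₁d ▸ alph_subset_wappend d γ₂ ha)
  have hdA₁ : ∀ c ∈ d, c ∈ A₁ := by
    intro c hc
    exact hγ₁ (hγ₁d ▸ mem_alph_wappend_left γ₂ hc)
  constructor
  · exact ⟨γ₂, fun a ha => ⟨hγ₂A₁ ha, hγ₂ ha⟩, hce2⟩
  · rintro δ ⟨γ, hγ, rfl⟩
    refine ⟨⟨wappend d γ, ?_, ?_⟩, ⟨γ, fun a ha => (hγ ha).2, rfl⟩⟩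
    · intro a ha
      rcases alph_wappend_subset d γ ha with h | h
      · exact hdA₁ _ h
      · exact (hγ h).1
    · rw [← wappend_assoc, ← hw₂]

lemma isOpen_iff_gen {O : Set (Word Γ)} :
    IsOpen O ↔ TopologicalSpace.GenerateOpen {S | ∃ u A, S = cone u A} O := Iff.rfl

lemma cone_basis {O : Set (Word Γ)} (hO : IsOpen O) {β : Word Γ} (hβ : β ∈ O) :
    ∃ w A, β ∈ cone w A ∧ cone w A ⊆ O := by
  rw [isOpen_iff_gen] at hO
  induction hO with
  | basic s hs => obtain ⟨u, A, rfl⟩ := hs; exact ⟨u, A, hβ, subset_rfl⟩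
  | univ =>
      refine ⟨[], Set.univ, ⟨β, fun a _ => trivial, wappend_nil β⟩, fun δ _ => trivial⟩
  | inter s t hs ht ihs iht =>
      obtain ⟨w₁, A₁, hm1, hs1⟩ := ihs hβ.1
      obtain ⟨w₂, A₂, hm2, hs2⟩ := iht hβ.2
      rcases le_total w₁.length w₂.length with hle | hle
      · obtain ⟨hm, hsub⟩ := cone_inter_aux hm1 hm2 hle
        exact ⟨w₂, A₁ ∩ A₂, hm, fun δ hδ => ⟨hs1 (hsub hδ).1, hs2 (hsub hδ).2⟩⟩
      · obtain ⟨hm, hsub⟩ := cone_inter_aux hm2 hm1 hle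
        exact ⟨w₁, A₂ ∩ A₁, hm, fun δ hδ => ⟨hs1 (hsub hδ).2, hs2 (hsub hδ).1⟩⟩
  | sUnion S hS ih =>
      obtain ⟨s, hsS, hβs⟩ := hβ
      obtain ⟨w, A, hm, hsub⟩ := ih s hsS hβs
      exact ⟨w, A, hm, fun δ hδ => ⟨s, hsS, hsub hδ⟩⟩

lemma isOpen_cone (w : List Γ) (A : Set Γ) : IsOpen (cone w A) := by
  rw [isOpen_iff_gen]
  exact TopologicalSpace.GenerateOpen.basic _ ⟨w, A, rfl⟩

lemma inl_mem_cone_empty (u : List Γ) : Sum.inl u ∈ cone u (∅ : Set Γ) := by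
  refine ⟨Sum.inl [], ?_, ?_⟩
  · intro a ha; simp [alph] at ha
  · rw [wappend_inl, List.append_nil]

lemma cone_empty_subset (u : List Γ) : cone u (∅ : Set Γ) ⊆ {Sum.inl u} := by
  rintro δ ⟨γ, hγ, rfl⟩
  cases γ with
  | inl r =>
      have : r = [] := by
        rcases r with _ | ⟨c, r'⟩
        · rfl
        · exact absurd (hγ (show c ∈ alph (Sum.inl (c :: r')) by simp [alph])) (by simp)
      subst this
      simp [wappend_inl]
  | inr f => exact absurd (hγ (show f 0 ∈ alph (Sum.inr f) from ⟨0, rfl⟩)) (by simp)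

lemma eq_take_cons_drop (l : List Γ) (i : ℕ) (h : i < l.length) :
    l = l.take i ++ [l[i]] ++ l.drop (i+1) := by
  conv_lhs => rw [← List.take_append_drop i l]
  rw [List.drop_eq_getElem_cons h]
  simp

lemma flatten_map_singleton (r : List Γ) : (r.map (fun c => [c])).flatten = r := by
  induction r <;> simp_all

lemma isInfProd_inl_self (w : List Γ) : IsInfProd w (fun _ => ([] : List Γ)) (Sum.inl w) := by
  constructor
  · intro n; rw [partialProd_const, flatten_replicate_nil]; simp
  · exact ⟨0, by rw [partialProd_const, flatten_replicate_nil]; simp⟩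

lemma exists_partialProd_between (u : List Γ) (v : ℕ → List Γ) (pos j₀ : ℕ)
    (h0 : (partialProd u v j₀).length ≤ pos)
    (hm : ∃ m, pos < (partialProd u v m).length) :
    ∃ j, j₀ ≤ j ∧ (partialProd u v j).length ≤ pos ∧ pos < (partialProd u v (j+1)).length := by
  classical
  have hfind := Nat.find_spec hm
  set m₀ := Nat.find hm with hm₀
  have hj₀ : j₀ < m₀ := by
    by_contra hcon
    push_neg at hcon
    have hmono := (partialProd_prefix_le u v hcon).length_le
    omega
  refine ⟨m₀ - 1, by omega, ?_, ?_⟩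
  · by_contra hcon
    push_neg at hcon
    exact absurd (Nat.find_min hm (m := m₀ - 1) (by omega) hcon) (by simp)
  · rw [show m₀ - 1 + 1 = m₀ by omega]
    exact hfind

end InfWords
namespace InfWords

variable {Γ : Type} {L : Set (Word Γ)}

lemma cover_aux {e : List Γ} (hee : synEq L (e ++ e) e) :
    ∀ parts : List (List Γ), (∀ p ∈ parts, ∃ x y, synEq L (x ++ p ++ y) e) →
    ∃ w, synEq L (e ++ w) e ∧ ∀ c ∈ parts.flatten, c ∈ w := by
  intro parts
  induction parts with
  | nil =>
      intro _
      exact ⟨[], by rw [List.append_nil]; exact synEq_refl e, by simp⟩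
  | cons p parts ih =>
      intro hparts
      obtain ⟨x, y, hxy⟩ := hparts p (by simp)
      obtain ⟨w', hw', hcov⟩ := ih (fun p' hp' => hparts p' (by simp [hp']))
      refine ⟨(x ++ p ++ y) ++ w', ?_, ?_⟩
      · rw [← List.append_assoc]
        have h2 : synEq L (e ++ (x ++ p ++ y)) e :=
          synEq_trans (synEq_append (synEq_refl e) hxy) hee
        exact synEq_trans (synEq_append h2 (synEq_refl w')) hw'
      · intro c hc
        rw [List.flatten_cons, List.mem_append] at hc
        rcases hc with hc | hc
        · exact List.mem_append.mpr (Or.inl (by simp [hc]))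
        · exact List.mem_append.mpr (Or.inr (hcov c hc))

lemma InMe_cover {e t : List Γ} (hee : synEq L (e ++ e) e) (hin : InMe L e t) :
    ∃ w, synEq L (e ++ w) e ∧ ∀ c ∈ t, c ∈ w := by
  obtain ⟨parts, ht, hparts⟩ := hin
  subst ht
  exact cover_aux hee parts hparts

lemma open_dir {M : Type} [Monoid M] [Finite M] {h : List Γ → M} (hh : IsHom h)
    (hrec : StronglyRecognizes h L) (hopen : IsOpen L)
    (s e t f : List Γ) (hse : synEq L (s ++ e) s) (hee : synEq L (e ++ e) e)
    (htf : synEq L (t ++ f) t) (hff : synEq L (f ++ f) f)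
    (hit : InMe L e t) (hif : InMe L e f)
    (hsub : pairSetSyn L s e ⊆ L) : pairSetSyn L (s ++ t) f ⊆ L := by
  obtain ⟨wt, hwt, hcovt⟩ := InMe_cover hee hit
  obtain ⟨wf, hwf, hcovf⟩ := InMe_cover hee hif
  set Z := e ++ (wt ++ wf) with hZ
  have hZe : synEq L Z e := by
    have h1 : synEq L ((e ++ wt) ++ wf) (e ++ wf) := synEq_append hwt (synEq_refl wf)
    have h2 : synEq L Z ((e ++ wt) ++ wf) := by rw [hZ, List.append_assoc]; exact synEq_refl _
    exact synEq_trans (synEq_trans h2 h1) hwf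
  have hab : synEq L ((s ++ t) ++ f) (s ++ t) := by
    rw [List.append_assoc]; exact synEq_append (synEq_refl s) htf
  apply pairSetSyn_subset hh hrec hab hff
  have hβmem : wappend s (omegaPow Z) ∈ pairSetSyn L s e :=
    ⟨s, fun _ => Z, synEq_refl s, fun _ => hZe, isInfProd_const s Z⟩
  have hβL : wappend s (omegaPow Z) ∈ L := hsub hβmem
  rcases eq_or_ne Z ([] : List Γ) with hZnil | hZne
  · -- degenerate case: everything empty
    have he0 : e = [] ∧ wt = [] ∧ wf = [] := by
      rw [hZ] at *
      rcases List.append_eq_nil_iff.mp hZnil with ⟨h1, h2⟩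
      rcases List.append_eq_nil_iff.mp h2 with ⟨h3, h4⟩
      exact ⟨h1, h3, h4⟩
    have ht0 : t = [] := by
      rw [List.eq_nil_iff_forall_not_mem]
      intro c hc
      have := hcovt c hc
      rw [he0.2.1] at this
      simp at this
    have hf0 : f = [] := by
      rw [List.eq_nil_iff_forall_not_mem]
      intro c hc
      have := hcovf c hc
      rw [he0.2.2] at this
      simp at this
    subst ht0; subst hf0
    have hβ' : wappend s (omegaPow Z) = Sum.inl s := by
      rw [hZnil, omegaPow_nil, wappend_inl, List.append_nil]
    refine ⟨Sum.inl s, ⟨s, fun _ => [], ?_, fun _ => synEq_refl [], isInfProd_inl_self s⟩, ?_⟩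
    · rw [List.append_nil]; exact synEq_refl s
    · rw [← hβ']; exact hβL
  · obtain ⟨w, A, hβc, hcsub⟩ := cone_basis hopen hβL
    obtain ⟨γ, hγA, hγeq⟩ := hβc
    obtain ⟨G, hβG⟩ : ∃ G, wappend s (omegaPow Z) = Sum.inr G := by
      rw [omegaPow_ne_nil hZne, wappend_inr_apply]; exact ⟨_, rfl⟩
    cases γ with
    | inl r => exact absurd (hγeq.trans hβG) (by rw [wappend_inl]; simp)
    | inr gγ =>
    have hfeq : wappend w (Sum.inr gγ) = Sum.inr G := hγeq.trans hβG
    rw [wappend_inr_apply] at hfeq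
    have happ := congrFun (Sum.inr.inj hfeq)
    have hwpre : IsPre w (Sum.inr G) := by
      rw [isPre_inr_iff]
      intro i hi
      have h1 := happ i
      rw [dif_pos hi] at h1
      simpa [List.get_eq_getElem] using h1
    have htail : ∀ n, gγ n = G (n + w.length) := by
      intro n
      have h1 := happ (n + w.length)
      rw [dif_neg (by omega)] at h1
      simpa using h1
    have hZlen : 0 < Z.length := List.length_pos_iff.mpr hZne
    have hIP : ∀ n, IsPre (s ++ (List.replicate n Z).flatten) (Sum.inr G) := by
      intro n
      have hip := isInfProd_const s Z
      rw [hβG] at hip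
      obtain ⟨hp1, _⟩ := hip
      have hp := hp1 n
      rwa [partialProd_const] at hp
    have hGval : ∀ pos, s.length ≤ pos → ∀ n, pos < s.length + n * Z.length →
        G pos = Z[(pos - s.length) % Z.length]'(Nat.mod_lt _ hZlen) := by
      intro pos hpos n hn
      have hp := hIP n
      rw [isPre_inr_iff] at hp
      have hlen : (s ++ (List.replicate n Z).flatten).length = s.length + n * Z.length := by
        simp [flatten_replicate_length]
      have h1 := hp pos (by omega)
      rw [List.getElem_append_right hpos] at h1
      rw [flatten_replicate_getElem Z n _ (by rw [flatten_replicate_length]; omega) hZne] at h1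
      exact h1.symm
    have hZA : ∀ c ∈ Z, c ∈ A := by
      intro c hc
      obtain ⟨⟨i, hi⟩, hgi⟩ := List.mem_iff_get.mp hc
      set pos := s.length + w.length * Z.length + i with hposdef
      have h1 : G pos = c := by
        rw [hGval pos (by omega) (w.length + 1) (by
          have hx : (w.length + 1) * Z.length = w.length * Z.length + Z.length := by ring
          omega)]
        have h2 : (pos - s.length) % Z.length = i := by
          have h3 : pos - s.length = w.length * Z.length + i := by omega
          rw [h3, Nat.mul_comm w.length Z.length, Nat.mul_add_mod, Nat.mod_eq_of_lt hi]
        rw [getElem_congr_idx h2 _ (by omega)]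
        simpa [List.get_eq_getElem] using hgi
      have hwle : w.length ≤ pos := by
        have := Nat.le_mul_of_pos_right w.length hZlen
        omega
      have h4 : gγ (pos - w.length) = c := by
        rw [htail, show pos - w.length + w.length = pos by omega]
        exact h1
      exact hγA ⟨pos - w.length, h4⟩
    set P := s ++ (List.replicate w.length Z).flatten with hP
    have hPlen : P.length = s.length + w.length * Z.length := by
      simp [hP, flatten_replicate_length]
    have hwP : w <+: P := isPre_prefix hwpre (hIP w.length) (by
      rw [hPlen]
      have := Nat.le_mul_of_pos_right w.length hZlen
      omega)
    obtain ⟨d, hd⟩ := hwP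
    have hdA : ∀ c ∈ d, c ∈ A := by
      intro c hc
      obtain ⟨⟨j, hj⟩, hgj⟩ := List.mem_iff_get.mp hc
      have hPpre := hIP w.length
      rw [← hP, isPre_inr_iff] at hPpre
      have hjP : w.length + j < P.length := by rw [← hd]; simp; omega
      have h2 : d[j] = G (w.length + j) := by
        have hb : w.length + j < (w ++ d).length := by simp; omega
        have e1 : (w ++ d)[w.length + j]'hb = d[j] := by
          rw [List.getElem_append_right (by omega)]
          exact getElem_congr_idx (by omega) _ _
        have e2 : (w ++ d)[w.length + j]'hb = P[w.length + j]'hjP := getElem_congr_list hd hb hjP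
        rw [← e1, e2]
        exact hPpre _ hjP
      have h3 : gγ j = c := by
        rw [htail, Nat.add_comm j w.length, ← h2]
        simpa [List.get_eq_getElem] using hgj
      exact hγA ⟨j, h3⟩
    have htA : ∀ c ∈ t, c ∈ A := fun c hc => hZA c (by rw [hZ]; simp [hcovt c hc])
    have hfA : ∀ c ∈ f, c ∈ A := fun c hc => hZA c (by rw [hZ]; simp [hcovf c hc])
    refine ⟨wappend (P ++ t) (omegaPow f),
      ⟨P ++ t, fun _ => f, ?_, fun _ => synEq_refl f, isInfProd_const _ f⟩, ?_⟩
    · have hsZ : synEq L (s ++ Z) s := synEq_trans (synEq_append (synEq_refl s) hZe) hse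
      exact synEq_append (synEq_pow_absorb hsZ w.length) (synEq_refl t)
    · apply hcsub
      refine ⟨wappend (d ++ t) (omegaPow f), ?_, ?_⟩
      · intro a ha
        rcases alph_wappend_subset (d ++ t) (omegaPow f) ha with hmem | hmem
        · rcases List.mem_append.mp hmem with hm | hm
          · exact hdA a hm
          · exact htA a hm
        · exact hfA a (alph_omegaPow_subset f hmem)
      · rw [← wappend_assoc, ← List.append_assoc, hd]

end InfWords
namespace InfWords

variable {Γ : Type} {L : Set (Word Γ)}

lemma alg_dir {M : Type} [Monoid M] [Finite M] {h : List Γ → M} (hh : IsHom h)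
    (hrec : StronglyRecognizes h L)
    (H : ∀ s e t f : List Γ, synEq L (s ++ e) s → synEq L (e ++ e) e →
      synEq L (t ++ f) t → synEq L (f ++ f) f →
      InMe L e t → InMe L e f →
      pairSetSyn L s e ⊆ L → pairSetSyn L (s ++ t) f ⊆ L) :
    IsOpen L := by
  have hcover : ∀ α ∈ L, ∃ C : Set (Word Γ), (∃ w A, C = cone w A) ∧ α ∈ C ∧ C ⊆ L := by
    intro α hα
    have hα' := hα
    rw [hrec] at hα'
    simp only [Set.mem_iUnion] at hα'
    obtain ⟨p, q, ⟨hlink, hne⟩, hαm⟩ := hα'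
    obtain ⟨u, v, hup, hvq, hprod⟩ := hαm
    cases α with
    | inl xh =>
        refine ⟨cone xh ∅, ⟨xh, ∅, rfl⟩, inl_mem_cone_empty xh, ?_⟩
        intro δ hδ
        have hδ' := cone_empty_subset xh hδ
        rw [Set.mem_singleton_iff] at hδ'
        rwa [hδ']
    | inr g =>
        set P := partialProd u v 1 with hPdef
        set E := v 0 with hEdef
        have hP1 : P = u ++ v 0 := by rw [hPdef, partialProd_succ, partialProd_zero]
        have hPh : h P = p * q := by rw [hP1, hh.map_mul, hup, hvq 0]
        have hPE : synEq L (P ++ E) P := synEq_of_hom_eq hh hrec (by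
          rw [hh.map_mul, hPh, hEdef, hvq 0, mul_assoc, hlink.2])
        have hEE : synEq L (E ++ E) E := synEq_of_hom_eq hh hrec (by
          rw [hh.map_mul, hEdef, hvq 0, hlink.2])
        have hvE : ∀ i, synEq L (v i) E :=
          fun i => synEq_of_hom_eq hh hrec (by rw [hvq i, hEdef, hvq 0])
        obtain ⟨hpre, hub⟩ := hprod
        have hkey : ∀ n, partialProd P (fun i => v (i+1)) n = partialProd u v (n+1) := by
          intro n
          induction n with
          | zero => rw [partialProd_zero]
          | succ m ih => rw [partialProd_succ, ih]; exact (partialProd_succ u v (m+1)).symm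
        have hαP : Sum.inr g ∈ pairSetSyn L P E := by
          refine ⟨P, fun i => v (i+1), synEq_refl P, fun i => hvE (i+1), ?_, ?_⟩
          · intro n; rw [hkey n]; exact hpre (n+1)
          · intro k
            obtain ⟨n, hn⟩ := hub k
            refine ⟨n, ?_⟩
            rw [hkey n]
            have := (partialProd_prefix_le u v (show n ≤ n+1 by omega)).length_le
            omega
        have hPEsub : pairSetSyn L P E ⊆ L :=
          pairSetSyn_subset hh hrec hPE hEE ⟨Sum.inr g, hαP, hα⟩
        set A : Set Γ := {a | ∃ n, g (n + P.length) = a} with hA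
        have hPpre' := (isPre_inr_iff P g).mp (hpre 1)
        have hblock : ∀ pos, P.length ≤ pos → ∃ x y j, 1 ≤ j ∧ v j = x ++ [g pos] ++ y := by
          intro pos hpos
          obtain ⟨j, hj1, hj2, hj3⟩ := exists_partialProd_between u v pos 1 hpos (hub pos)
          have hjl : partialProd u v (j+1) = partialProd u v j ++ v j := partialProd_succ u v j
          have hll : (partialProd u v (j+1)).length =
              (partialProd u v j).length + (v j).length := by
            rw [hjl]; simp
          have hlt : pos - (partialProd u v j).length < (v j).length := by omega
          have hgj : (v j)[pos - (partialProd u v j).length]'hlt = g pos := by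
            have hp := (isPre_inr_iff _ g).mp (hpre (j+1))
            have h1 := hp pos hj3
            have h2 : (partialProd u v (j+1))[pos]'hj3 =
                (partialProd u v j ++ v j)[pos]'(by rw [← hjl]; exact hj3) :=
              getElem_congr_list hjl _ _
            rw [h2, List.getElem_append_right (by omega)] at h1
            exact h1
          refine ⟨(v j).take (pos - (partialProd u v j).length),
            (v j).drop (pos - (partialProd u v j).length + 1), j, hj1, ?_⟩
          rw [← hgj]
          exact eq_take_cons_drop (v j) _ hlt
        have hAblock : ∀ a ∈ A, ∃ x y j, 1 ≤ j ∧ v j = x ++ [a] ++ y := by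
          rintro a ⟨n, rfl⟩
          exact hblock (n + P.length) (by omega)
        have hInMe_list : ∀ r : List Γ, (∀ c ∈ r, c ∈ A) → InMe L E r := by
          intro r hr
          refine ⟨r.map (fun c => [c]), (flatten_map_singleton r).symm, ?_⟩
          intro pp hpp
          obtain ⟨c, hc, rfl⟩ := List.mem_map.mp hpp
          obtain ⟨x, y, j, hj1, hvj⟩ := hAblock c (hr c hc)
          exact ⟨x, y, by rw [← hvj]; exact hvE j⟩
        refine ⟨cone P A, ⟨P, A, rfl⟩, ?_, ?_⟩
        · refine ⟨Sum.inr (fun n => g (n + P.length)), fun a ha => ha, ?_⟩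
          rw [wappend_inr_apply]
          congr 1
          funext n
          rcases Nat.lt_or_ge n P.length with hn | hn
          · rw [dif_pos hn]
            simp only [List.get_eq_getElem]
            exact hPpre' n hn
          · rw [dif_neg (by omega)]
            congr 1
            omega
        · rintro δ ⟨γ', hγ'A, rfl⟩
          cases γ' with
          | inl r =>
              have hrA : ∀ c ∈ r, c ∈ A := fun c hc => hγ'A (show c ∈ alph (Sum.inl r) from hc)
              have hH := H P E r [] hPE hEE (by rw [List.append_nil]; exact synEq_refl r)
                (by rw [List.append_nil]; exact synEq_refl ([] : List Γ))
                (hInMe_list r hrA) ⟨[], rfl, by simp⟩ hPEsub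
              apply hH
              rw [wappend_inl]
              exact ⟨P ++ r, fun _ => [], synEq_refl _, fun _ => synEq_refl [],
                isInfProd_inl_self _⟩
          | inr g' =>
              have hg'A : ∀ n, g' n ∈ A := fun n => hγ'A ⟨n, rfl⟩
              set c' : ℕ → ℕ → M := fun i j => h (seg g' i j) with hc'def
              obtain ⟨φ, q', hφ, hc'⟩ := InfWordsAux.ramsey_pairs c'
              have cmul : ∀ {i j k : ℕ}, i ≤ j → j ≤ k → c' i j * c' j k = c' i k := by
                intro i j k hij hjk
                rw [hc'def]
                simp only
                rw [← hh.map_mul, seg_append g' hij hjk]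
              set t' := seg g' 0 (φ 1) with ht'def
              set f' := seg g' (φ 1) (φ 2) with hf'def
              have hφ01 : φ 0 < φ 1 := hφ (by omega)
              have hφ12 : φ 1 < φ 2 := hφ (by omega)
              have hφ23 : φ 2 < φ 3 := hφ (by omega)
              have hidem : q' * q' = q' := by
                calc q' * q' = c' (φ 1) (φ 2) * c' (φ 2) (φ 3) := by
                      rw [hc' 1 2 (by omega), hc' 2 3 (by omega)]
                  _ = c' (φ 1) (φ 3) := cmul (le_of_lt hφ12) (le_of_lt hφ23)
                  _ = q' := hc' 1 3 (by omega)
              have htf' : synEq L (t' ++ f') t' := by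
                apply synEq_of_hom_eq hh hrec
                have e1 : t' ++ f' = seg g' 0 (φ 2) :=
                  seg_append g' (by omega) (le_of_lt hφ12)
                have e2 : seg g' 0 (φ 0) ++ seg g' (φ 0) (φ 2) = seg g' 0 (φ 2) :=
                  seg_append g' (by omega) (by omega)
                have e3 : seg g' 0 (φ 0) ++ seg g' (φ 0) (φ 1) = seg g' 0 (φ 1) :=
                  seg_append g' (by omega) (le_of_lt hφ01)
                rw [e1, ← e2, hh.map_mul, ht'def, ← e3, hh.map_mul]
                congr 1
                exact (hc' 0 2 (by omega)).trans (hc' 0 1 (by omega)).symm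
              have hf'q : h f' = q' := hc' 1 2 (by omega)
              have hff' : synEq L (f' ++ f') f' := by
                apply synEq_of_hom_eq hh hrec
                rw [hh.map_mul, hf'q, hidem]
              have hInMe_t' : InMe L E t' := by
                apply hInMe_list
                intro c hc
                obtain ⟨i, _, rfl⟩ := List.mem_map.mp hc
                exact hg'A _
              have hInMe_f' : InMe L E f' := by
                apply hInMe_list
                intro c hc
                obtain ⟨i, _, rfl⟩ := List.mem_map.mp hc
                exact hg'A _
              have hH := H P E t' f' hPE hEE htf' hff' hInMe_t' hInMe_f' hPEsub
              apply hH
              rw [wappend_inr_apply]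
              refine ⟨P ++ t', fun j => seg g' (φ (j+1)) (φ (j+2)), synEq_refl _, ?_, ?_, ?_⟩
              · intro j
                apply synEq_of_hom_eq hh hrec
                exact (hc' (j+1) (j+2) (by omega)).trans (hc' 1 2 (by omega)).symm
              · intro n
                have hkey2 : ∀ n, partialProd (P ++ t')
                    (fun j => seg g' (φ (j+1)) (φ (j+2))) n = P ++ seg g' 0 (φ (n+1)) := by
                  intro n
                  induction n with
                  | zero => rw [partialProd_zero, ht'def]
                  | succ m ih =>
                      rw [partialProd_succ, ih, List.append_assoc]
                      congr 1
                      exact seg_append g' (by omega) (le_of_lt (hφ (by omega)))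
                rw [hkey2 n, isPre_inr_iff]
                intro i hi
                show _ = if h : i < P.length then P.get ⟨i, h⟩ else g' (i - P.length)
                rcases Nat.lt_or_ge i P.length with hn | hn
                · rw [List.getElem_append_left hn, dif_pos hn]
                  simp [List.get_eq_getElem]
                · rw [List.getElem_append_right hn, dif_neg (by omega)]
                  rw [seg_getElem]
                  simp
              · intro k
                have hkey2 : ∀ n, partialProd (P ++ t')
                    (fun j => seg g' (φ (j+1)) (φ (j+2))) n = P ++ seg g' 0 (φ (n+1)) := by
                  intro n
                  induction n with
                  | zero => rw [partialProd_zero, ht'def]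
                  | succ m ih =>
                      rw [partialProd_succ, ih, List.append_assoc]
                      congr 1
                      exact seg_append g' (by omega) (le_of_lt (hφ (by omega)))
                refine ⟨k, ?_⟩
                rw [hkey2 k]
                have h6 : k + 1 ≤ φ (k + 1) := hφ.le_apply
                simp only [List.length_append, seg_length]
                omega
  -- assemble: L is a union of basic open cones
  have hL : L = ⋃₀ {C : Set (Word Γ) | (∃ w A, C = cone w A) ∧ C ⊆ L} := by
    apply Set.Subset.antisymm
    · intro α hα
      obtain ⟨C, hC1, hC2, hC3⟩ := hcover α hα
      exact ⟨C, ⟨hC1, hC3⟩, hC2⟩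
    · rintro α ⟨C, ⟨_, hCL⟩, hαC⟩
      exact hCL hαC
  rw [hL]
  apply isOpen_sUnion
  rintro C ⟨⟨w, A, rfl⟩, _⟩
  exact isOpen_cone w A

end InfWords
theorem open_iff_algebraic (Γ : Type) [Fintype Γ] (L : Set (InfWords.Word Γ))
    (hreg : InfWords.Regular L) :
    IsOpen L ↔ ∀ s e t f : List Γ,
      InfWords.synEq L (s ++ e) s → InfWords.synEq L (e ++ e) e →
      InfWords.synEq L (t ++ f) t → InfWords.synEq L (f ++ f) f →
      InfWords.InMe L e t → InfWords.InMe L e f →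
      InfWords.pairSetSyn L s e ⊆ L → InfWords.pairSetSyn L (s ++ t) f ⊆ L := by
  obtain ⟨M, iM, hfin, h, hh, _hsurj, hrec⟩ := hreg
  letI := iM
  haveI := hfin
  constructor
  · intro hopen s e t f hse hee htf hff hit hif hsub
    exact InfWords.open_dir hh hrec hopen s e t f hse hee htf hff hit hif hsub
  · intro H
    exact InfWords.alg_dir hh hrec H
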